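/- Let d ≥ 2 be an even integer, a ∈ (0,1), and let z, z' ∈ {0,1}^d both have weight exactly d/2. Set Z = √(d(1 − a + a²/2)), w = (𝟙_d − a·z)/Z and w' = (𝟙_d − a·z')/Z, where 𝟙_d = (1,…,1) ∈ ℝ^d. Then cos θ(w,w') ≥ 1 − a² > 0, θ(w,w') < π/2, and θ(w,w') ≤ √(18/7)·a. -/

import Mathlib

open Finset
open scoped RealInnerProductSpace

/-- The weight of a binary word `x : Fin d → Bool` is the number of coordinates equal to 1. -/
def weight {d : ℕ} (x : Fin d → Bool) : ℕ := (Finset.univ.filter fun i => x i = true).card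

set_option maxHeartbeats 1600000

/-- If `z, z'` are binary words of weight `d/2` and `w = (𝟙_d − a·z)/Z`,
`w' = (𝟙_d − a·z')/Z` with `Z = √(d(1 − a + a²/2))`, then
`cos θ(w,w') ≥ 1 − a² > 0`, `θ(w,w') < π/2`, and `θ(w,w') ≤ √(18/7)·a`. -/
theorem stmt_6 (d : ℕ) (hd : 2 ≤ d) (hde : Even d) (a : ℝ) (ha : 0 < a) (ha' : a < 1)
    (z z' : Fin d → Bool) (hz : weight z = d / 2) (hz' : weight z' = d / 2)
    (Z : ℝ) (hZ : Z = Real.sqrt ((d : ℝ) * (1 - a + a ^ 2 / 2)))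
    (w w' : EuclideanSpace ℝ (Fin d))
    (hw : ∀ i, w i = (1 - a * (if z i then (1 : ℝ) else 0)) / Z)
    (hw' : ∀ i, w' i = (1 - a * (if z' i then (1 : ℝ) else 0)) / Z) :
    (1 - a ^ 2 ≤ Real.cos (InnerProductGeometry.angle w w') ∧ 0 < 1 - a ^ 2) ∧
    InnerProductGeometry.angle w w' < Real.pi / 2 ∧
    InnerProductGeometry.angle w w' ≤ Real.sqrt (18 / 7) * a := by
  have hd0 : (0:ℝ) < d := by
    have : (2:ℝ) ≤ d := by exact_mod_cast hd
    linarith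
  have hQ : 0 < 1 - a + a ^ 2 / 2 := by nlinarith
  have hZpos : 0 < Z := by
    rw [hZ]; exact Real.sqrt_pos.mpr (by positivity)
  have hZsq : Z ^ 2 = (d:ℝ) * (1 - a + a ^ 2 / 2) := by
    rw [hZ]; exact Real.sq_sqrt (by positivity)
  -- weights as reals
  obtain ⟨k, hk⟩ := hde
  have hWz : 2 * (weight z : ℝ) = (d : ℝ) := by
    have : 2 * weight z = d := by omega
    exact_mod_cast this
  have hWz' : 2 * (weight z' : ℝ) = (d : ℝ) := by
    have : 2 * weight z' = d := by omega
    exact_mod_cast this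
  -- generic inner product computation
  have hgen : ∀ (u v : Fin d → Bool) (x y : EuclideanSpace ℝ (Fin d)),
      (∀ i, x i = (1 - a * (if u i then (1:ℝ) else 0)) / Z) →
      (∀ i, y i = (1 - a * (if v i then (1:ℝ) else 0)) / Z) →
      ⟪x, y⟫ = ((d:ℝ) - a * (weight u : ℝ) - a * (weight v : ℝ)
        + a ^ 2 * ∑ i, (if u i then (1:ℝ) else 0) * (if v i then (1:ℝ) else 0)) / Z ^ 2 := by
    intro u v x y hx hy
    have h1 : ⟪x, y⟫ = ∑ i, x i * y i := by
      simp [PiLp.inner_apply, RCLike.inner_apply]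
      exact Finset.sum_congr rfl fun i _ => mul_comm _ _
    rw [h1]
    have hterm : ∀ i, x i * y i =
        (1 - a * (if u i then (1:ℝ) else 0) - a * (if v i then (1:ℝ) else 0)
          + a ^ 2 * ((if u i then (1:ℝ) else 0) * (if v i then (1:ℝ) else 0))) / Z ^ 2 := by
      intro i; rw [hx, hy]; ring
    rw [Finset.sum_congr rfl (fun i _ => hterm i), ← Finset.sum_div]
    congr 1
    rw [Finset.sum_add_distrib, Finset.sum_sub_distrib, Finset.sum_sub_distrib,
      ← Finset.mul_sum, ← Finset.mul_sum, ← Finset.mul_sum]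
    simp [Finset.sum_boole, weight, Finset.card_univ]
  have hdiag : ∀ u : Fin d → Bool,
      (∑ i, (if u i then (1:ℝ) else 0) * (if u i then (1:ℝ) else 0)) = (weight u : ℝ) := by
    intro u
    have : ∀ i, (if u i then (1:ℝ) else 0) * (if u i then (1:ℝ) else 0)
        = (if u i then (1:ℝ) else 0) := by
      intro i; by_cases h : u i <;> simp [h]
    rw [Finset.sum_congr rfl (fun i _ => this i)]
    simp [Finset.sum_boole, weight]
  -- norms are 1
  have hnorm : ∀ (u : Fin d → Bool) (x : EuclideanSpace ℝ (Fin d)),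
      2 * (weight u : ℝ) = (d : ℝ) →
      (∀ i, x i = (1 - a * (if u i then (1:ℝ) else 0)) / Z) → ‖x‖ = 1 := by
    intro u x hWu hx
    have hip : ⟪x, x⟫ = 1 := by
      rw [hgen u u x x hx hx, hdiag u]
      have hnum : (d:ℝ) - a * (weight u : ℝ) - a * (weight u : ℝ)
          + a ^ 2 * (weight u : ℝ) = Z ^ 2 := by
        rw [hZsq]; linear_combination (a ^ 2 / 2 - a) * hWu
      rw [hnum]
      field_simp
    have h2 : ‖x‖ * ‖x‖ = 1 := by rw [← real_inner_self_eq_norm_mul_norm, hip]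
    nlinarith [norm_nonneg x]
  have hnw : ‖w‖ = 1 := hnorm z w hWz hw
  have hnw' : ‖w'‖ = 1 := hnorm z' w' hWz' hw'
  set M : ℝ := ∑ i, (if z i then (1:ℝ) else 0) * (if z' i then (1:ℝ) else 0) with hMdef
  have hM : 0 ≤ M := by
    apply Finset.sum_nonneg
    intro i _
    by_cases h : z i <;> by_cases h' : z' i <;> simp [h, h']
  have hcos : Real.cos (InnerProductGeometry.angle w w')
      = ((d:ℝ) - a * (weight z : ℝ) - a * (weight z' : ℝ) + a ^ 2 * M) / Z ^ 2 := by
    rw [InnerProductGeometry.cos_angle, hnw, hnw', hgen z z' w w' hw hw', mul_one, div_one]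
  have hZ2pos : (0:ℝ) < Z ^ 2 := by positivity
  have hlow : 1 - a ^ 2 ≤ Real.cos (InnerProductGeometry.angle w w') := by
    rw [hcos, le_div_iff₀ hZ2pos, hZsq]
    nlinarith [mul_nonneg (sq_nonneg a) hM,
      mul_nonneg (mul_nonneg hd0.le (sq_nonneg a)) (sq_nonneg (1 - a))]
  have hpos : 0 < 1 - a ^ 2 := by nlinarith
  have hθpi : InnerProductGeometry.angle w w' ≤ Real.pi := InnerProductGeometry.angle_le_pi w w'
  have hθ0 : 0 ≤ InnerProductGeometry.angle w w' := InnerProductGeometry.angle_nonneg w w'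
  have hhalf : InnerProductGeometry.angle w w' < Real.pi / 2 := by
    by_contra h
    push_neg at h
    have := Real.cos_nonpos_of_pi_div_two_le_of_le h (by linarith [Real.pi_pos])
    linarith
  refine ⟨⟨hlow, hpos⟩, hhalf, ?_⟩
  clear hcos hM hMdef M hgen hdiag hnorm hw hw' hz hz' hZ hnw hnw'
  -- third part
  set θ := InnerProductGeometry.angle w w' with hθdef
  have hsin2 : Real.sin (θ / 2) ^ 2 ≤ a ^ 2 / 2 := by
    have hc2 : Real.cos θ = 2 * Real.cos (θ / 2) ^ 2 - 1 := by
      rw [← Real.cos_two_mul]; congr 1; ring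
    have h1 := hlow
    rw [hc2] at h1
    have hsc := Real.sin_sq_add_cos_sq (θ / 2)
    linarith
  have hsin_nonneg : 0 ≤ Real.sin (θ / 2) := by
    apply Real.sin_nonneg_of_nonneg_of_le_pi
    · linarith
    · linarith [Real.pi_pos]
  -- concavity: sin x ≥ (2√2/π) x on [0, π/4], via concavity between 0 and π/4
  set t : ℝ := (2 * θ) / Real.pi with htdef
  have hπ : 0 < Real.pi := Real.pi_pos
  have ht0 : 0 ≤ t := by positivity
  have ht1 : t ≤ 1 := by
    rw [htdef, div_le_one hπ]; linarith
  have hconc := (strictConcaveOn_sin_Icc.concaveOn).2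
    (Set.mem_Icc.mpr ⟨le_refl 0, hπ.le⟩)
    (Set.mem_Icc.mpr ⟨by positivity, by linarith⟩ : Real.pi / 4 ∈ Set.Icc 0 Real.pi)
    (by linarith : (0:ℝ) ≤ 1 - t) ht0 (by ring)
  have hcomb : (1 - t) • (0:ℝ) + t • (Real.pi / 4) = θ / 2 := by
    simp only [smul_eq_mul, htdef]
    field_simp
    ring
  rw [hcomb, Real.sin_zero] at hconc
  rw [Real.sin_pi_div_four] at hconc
  simp only [smul_eq_mul, mul_zero, zero_add] at hconc
  -- hconc : t * (√2 / 2) ≤ sin (θ/2)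
  have h2 : Real.sqrt 2 ^ 2 = 2 := Real.sq_sqrt (by norm_num)
  have hsq : (t * (Real.sqrt 2 / 2)) ^ 2 ≤ Real.sin (θ / 2) ^ 2 := by
    apply pow_le_pow_left₀ (by positivity) hconc
  have ht2 : t ^ 2 ≤ a ^ 2 := by nlinarith [hsq, h2, hsin2]
  have hta : t ≤ a := by nlinarith [ht2, ht0, ha.le]
  have hθle : θ ≤ Real.pi / 2 * a := by
    rw [htdef, div_le_iff₀ hπ] at hta
    linarith
  have hπle : Real.pi / 2 ≤ Real.sqrt (18 / 7) := by
    rw [Real.le_sqrt (by positivity) (by norm_num)]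
    nlinarith [Real.pi_lt_d2, Real.pi_gt_three]
  calc θ ≤ Real.pi / 2 * a := hθle
    _ ≤ Real.sqrt (18 / 7) * a := by
        apply mul_le_mul_of_nonneg_right hπle ha.le
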